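/- Let 1/2 < α < 1 and a < b, and define ψ(t) = ((b−t)^{2α−1}/Γ(α)²) · ∫_1^{(b−a)/(b−t)} (w−1)^{α−1} w^{α−1} dw for t ∈ [a,b). Then ψ(a) = 0 and lim_{t → b⁻} ψ(t) = (b−a)^{2α−1} / ((2α−1) Γ(α)²). -/

import Mathlib

open Real Set Filter Topology MeasureTheory

lemma aux_integrable (α : ℝ) (hα1 : 1/2 < α) (hα2 : α < 1) {M : ℝ} (hM : 1 ≤ M) :
    IntervalIntegrable (fun w => (w - 1) ^ (α - 1) * w ^ (α - 1)) volume 1 M := by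
  have hg : IntervalIntegrable (fun w : ℝ => (w - 1) ^ (α - 1)) volume 1 M := by
    have := (intervalIntegral.intervalIntegrable_rpow' (a := 0) (b := M - 1) (r := α - 1) (by linarith)).comp_sub_right 1
    simpa using this
  refine hg.mono_fun (by apply Measurable.aestronglyMeasurable; measurability) ?_
  filter_upwards [ae_restrict_mem measurableSet_uIoc] with x hx
  rw [Set.uIoc_of_le hM] at hx
  have hx1 : (1:ℝ) < x := hx.1
  have h1 : (0:ℝ) ≤ (x - 1) ^ (α - 1) := Real.rpow_nonneg (by linarith) _
  have h2 : (0:ℝ) ≤ x ^ (α - 1) := Real.rpow_nonneg (by linarith) _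
  have h3 : x ^ (α - 1) ≤ 1 := by
    have := Real.rpow_le_rpow_of_nonpos (x := 1) (y := x) one_pos hx1.le (by linarith : α - 1 ≤ 0)
    simpa using this
  simp only [Real.norm_eq_abs, abs_of_nonneg (mul_nonneg h1 h2), abs_of_nonneg h1]
  calc (x - 1) ^ (α - 1) * x ^ (α - 1) ≤ (x - 1) ^ (α - 1) * 1 := by
        exact mul_le_mul_of_nonneg_left h3 h1
    _ = (x - 1) ^ (α - 1) := mul_one _

lemma aux_bounds (α : ℝ) (hα1 : 1/2 < α) (hα2 : α < 1) {M : ℝ} (hM : 1 ≤ M) :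
    (M ^ (2*α-1) - 1) / (2*α-1) ≤ (∫ w in (1:ℝ)..M, (w - 1) ^ (α - 1) * w ^ (α - 1)) ∧
    (∫ w in (1:ℝ)..M, (w - 1) ^ (α - 1) * w ^ (α - 1)) ≤ M ^ (2*α-1) / (2*α-1) := by
  have hp : 0 < 2*α - 1 := by linarith
  have hint := aux_integrable α hα1 hα2 hM
  have hintU : IntervalIntegrable (fun w : ℝ => (w - 1) ^ (2*α - 2)) volume 1 M := by
    have := (intervalIntegral.intervalIntegrable_rpow' (a := 0) (b := M - 1) (r := 2*α - 2) (by linarith)).comp_sub_right 1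
    simpa using this
  have hintL : IntervalIntegrable (fun w : ℝ => w ^ (2*α - 2)) volume 1 M :=
    intervalIntegral.intervalIntegrable_rpow' (by linarith)
  constructor
  · -- lower bound
    have hmono : ∫ w in (1:ℝ)..M, w ^ (2*α-2) ≤ ∫ w in (1:ℝ)..M, (w - 1) ^ (α - 1) * w ^ (α - 1) := by
      apply intervalIntegral.integral_mono_ae_restrict hM hintL hint
      have hne : ∀ᵐ x ∂(volume : Measure ℝ), x ≠ 1 := by
        have : (volume : Measure ℝ) {(1:ℝ)} = 0 := measure_singleton 1
        rw [MeasureTheory.ae_iff]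
        simp [Set.setOf_eq_eq_singleton', this]
      filter_upwards [ae_restrict_of_ae hne, ae_restrict_mem measurableSet_Icc] with x hx1 hx2
      have hxgt : (1:ℝ) < x := lt_of_le_of_ne hx2.1 (Ne.symm hx1)
      have hx0 : (0:ℝ) < x := by linarith
      have : x ^ (2*α - 2) = x ^ (α-1) * x ^ (α-1) := by
        rw [← Real.rpow_add hx0]; ring_nf
      rw [this]
      apply mul_le_mul_of_nonneg_right _ (Real.rpow_nonneg hx0.le _)
      exact Real.rpow_le_rpow_of_nonpos (by linarith) (by linarith) (by linarith)
    calc (M ^ (2*α-1) - 1) / (2*α-1) = ∫ w in (1:ℝ)..M, w ^ (2*α-2) := by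
          rw [integral_rpow (Or.inl (by linarith))]
          norm_num
          ring_nf
      _ ≤ _ := hmono
  · -- upper bound
    have hmono : ∫ w in (1:ℝ)..M, (w - 1) ^ (α - 1) * w ^ (α - 1) ≤ ∫ w in (1:ℝ)..M, (w-1) ^ (2*α-2) := by
      apply intervalIntegral.integral_mono_on hM hint hintU
      intro x hx
      rcases eq_or_lt_of_le hx.1 with h | h
      · rw [← h]
        norm_num
        rw [Real.zero_rpow (by linarith : α - 1 ≠ 0), Real.zero_rpow (by linarith : 2*α - 2 ≠ 0)]
      · have hx0 : (0:ℝ) < x - 1 := by linarith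
        have : (x-1) ^ (2*α - 2) = (x-1) ^ (α-1) * (x-1) ^ (α-1) := by
          rw [← Real.rpow_add hx0]; ring_nf
        rw [this]
        apply mul_le_mul_of_nonneg_left _ (Real.rpow_nonneg hx0.le _)
        exact Real.rpow_le_rpow_of_nonpos hx0 (by linarith) (by linarith)
    have hval : ∫ w in (1:ℝ)..M, (w-1) ^ (2*α-2) = (M-1) ^ (2*α-1) / (2*α-1) := by
      have := intervalIntegral.integral_comp_sub_right (fun x : ℝ => x ^ (2*α-2)) 1 (a := 1) (b := M)
      rw [this]
      rw [integral_rpow (Or.inl (by linarith))]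
      norm_num
      rw [Real.zero_rpow (by linarith : 2*α - 2 + 1 ≠ 0)]
      ring_nf
    calc (∫ w in (1:ℝ)..M, (w - 1) ^ (α - 1) * w ^ (α - 1)) ≤ (M-1) ^ (2*α-1) / (2*α-1) := by
          rw [← hval]; exact hmono
      _ ≤ M ^ (2*α-1) / (2*α-1) := by
          gcongr
          · linarith

theorem stmt5 (α a b : ℝ) (hα : 1 / 2 < α ∧ α < 1) (hab : a < b)
    (ψ : ℝ → ℝ)
    (hψ : ∀ t, ψ t = ((b - t) ^ (2 * α - 1) / (Real.Gamma α) ^ 2) *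
        ∫ w in (1:ℝ)..((b - a) / (b - t)), (w - 1) ^ (α - 1) * w ^ (α - 1)) :
    ψ a = 0 ∧
      Filter.Tendsto ψ (nhdsWithin b (Set.Iio b))
        (nhds ((b - a) ^ (2 * α - 1) / ((2 * α - 1) * (Real.Gamma α) ^ 2))) := by
  obtain ⟨hα1, hα2⟩ := hα
  have hp : 0 < 2 * α - 1 := by linarith
  have hba : (0:ℝ) < b - a := by linarith
  set F : ℝ → ℝ := fun M => ∫ w in (1:ℝ)..M, (w - 1) ^ (α - 1) * w ^ (α - 1) with hF
  refine ⟨?_, ?_⟩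
  · rw [hψ, div_self hba.ne', intervalIntegral.integral_same, mul_zero]
  · -- key limit: F M / M^p → 1/p
    have hkey : Tendsto (fun M => F M / M ^ (2*α-1)) atTop (𝓝 (1 / (2*α-1))) := by
      apply tendsto_of_tendsto_of_tendsto_of_le_of_le'
        (g := fun M : ℝ => (1 - (M ^ (2*α-1))⁻¹) / (2*α-1)) (h := fun _ => 1 / (2*α-1))
      · have h1 : Tendsto (fun M : ℝ => (M ^ (2*α-1))⁻¹) atTop (𝓝 0) :=
          (tendsto_rpow_atTop hp).inv_tendsto_atTop
        have := ((tendsto_const_nhds (x := (1:ℝ))).sub h1).div_const (2*α-1)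
        simpa using this
      · exact tendsto_const_nhds
      · filter_upwards [eventually_ge_atTop (1:ℝ)] with M hM
        have hMp : (0:ℝ) < M ^ (2*α-1) := Real.rpow_pos_of_pos (by linarith) _
        have hb := (aux_bounds α hα1 hα2 hM).1
        have e : (1 - (M ^ (2*α-1))⁻¹) / (2*α-1) = ((M ^ (2*α-1) - 1) / (2*α-1)) / M ^ (2*α-1) := by
          rw [div_div, div_eq_div_iff hp.ne' (by positivity)]
          field_simp
        rw [e]
        exact div_le_div_of_nonneg_right hb hMp.le
      · filter_upwards [eventually_ge_atTop (1:ℝ)] with M hM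
        have hMp : (0:ℝ) < M ^ (2*α-1) := Real.rpow_pos_of_pos (by linarith) _
        have hb := (aux_bounds α hα1 hα2 hM).2
        have e : (1:ℝ) / (2*α-1) = (M ^ (2*α-1) / (2*α-1)) / M ^ (2*α-1) := by
          rw [div_div, div_eq_div_iff hp.ne' (by positivity)]
          field_simp
        rw [e]
        exact div_le_div_of_nonneg_right hb hMp.le
    -- M t → atTop
    have hbt : Tendsto (fun t => b - t) (𝓝[<] b) (𝓝[>] 0) := by
      apply tendsto_nhdsWithin_of_tendsto_nhds_of_eventually_within
      · have : Tendsto (fun t : ℝ => b - t) (𝓝 b) (𝓝 (b - b)) :=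
          (continuous_const.sub continuous_id).tendsto b
        simpa using this.mono_left nhdsWithin_le_nhds
      · filter_upwards [self_mem_nhdsWithin] with t ht
        simpa [sub_pos] using ht
    have hM : Tendsto (fun t => (b - a) / (b - t)) (𝓝[<] b) atTop := by
      have := (tendsto_inv_nhdsGT_zero.comp hbt).const_mul_atTop hba
      simpa [div_eq_mul_inv, Function.comp] using this
    have hcomp : Tendsto (fun t => ((b-a) ^ (2*α-1) / (Real.Gamma α)^2) *
        (F ((b - a) / (b - t)) / ((b - a) / (b - t)) ^ (2*α-1))) (𝓝[<] b)
        (𝓝 (((b-a) ^ (2*α-1) / (Real.Gamma α)^2) * (1 / (2*α-1)))) :=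
      (hkey.comp hM).const_mul _
    have hlim_eq : ((b-a) ^ (2*α-1) / (Real.Gamma α)^2) * (1 / (2*α-1))
        = (b - a) ^ (2 * α - 1) / ((2 * α - 1) * (Real.Gamma α) ^ 2) := by
      rw [div_mul_div_comm, mul_one, mul_comm ((Real.Gamma α)^2) (2*α-1)]
    rw [← hlim_eq]
    apply Tendsto.congr' _ hcomp
    filter_upwards [self_mem_nhdsWithin] with t ht
    have htb : t < b := ht
    have hbt0 : (0:ℝ) < b - t := by linarith
    have h1 : (b-a) ^ (2*α-1) ≠ 0 := (Real.rpow_pos_of_pos hba _).ne'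
    have h2 : (b-t) ^ (2*α-1) ≠ 0 := (Real.rpow_pos_of_pos hbt0 _).ne'
    simp only [hF]
    rw [hψ t, Real.div_rpow hba.le hbt0.le, div_mul_eq_mul_div, div_mul_eq_mul_div]
    congr 1
    field_simp
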